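/- arXiv:2512.23314 — 2 statements merged into one kernel-verified Lean document; each statement's English description precedes it below -/
import Mathlib

section
/- Let q ≥ 2 and 0 < r < q be integers and T : ℕ → ℕ a text. For every integer k ≥ 1 and all integers s, e with k + 1 ≤ s ≤ e, the Karp–Rabin fingerprint satisfies the k-step rolling recurrence φ(s,e) ≡ φ(s−k, e−k)·r^{k} − φ(s−k, s−1)·r^{e−s+1} + φ(e−k+1, e) (mod q). (The case k = 16 is the update rule used by the data-parallel SIMD fingerprint computation, which advances 16 sliding windows per iteration.) -/
/-- Karp–Rabin fingerprint of `T[s..e]` (1-indexed) with base `r` modulo `q`: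
    `φ(s,e) = (Σ_{i=s}^{e} T(i)·r^(e−i)) mod q`.  For `e < s` (e.g. `e = s-1`)
    the sum is empty, so `φ(s,s−1) = 0`. -/
def karpRabin (q r : ℤ) (T : ℕ → ℕ) (s e : ℕ) : ℤ :=
  (∑ i ∈ Finset.Icc s e, (T i : ℤ) * r ^ (e - i)) % q

/-- `k`-step rolling recurrence:
    `φ(s,e) ≡ φ(s−k,e−k)·r^k − φ(s−k,s−1)·r^(e−s+1) + φ(e−k+1,e) (mod q)`. -/
theorem karpRabin_roll_k
    (q r : ℤ) (hq : 2 ≤ q) (hr0 : 0 < r) (hrq : r < q)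
    (T : ℕ → ℕ) (k s e : ℕ) (hk : 1 ≤ k) (hks : k + 1 ≤ s) (hse : s ≤ e) :
    karpRabin q r T s e ≡
      karpRabin q r T (s - k) (e - k) * r ^ k
        - karpRabin q r T (s - k) (s - 1) * r ^ (e - s + 1)
        + karpRabin q r T (e - k + 1) e [ZMOD q] := by
  obtain ⟨u, d, rfl, rfl⟩ : ∃ u d, s = u + 1 + k ∧ e = u + 1 + k + d :=
    ⟨s - k - 1, e - s, by omega, by omega⟩
  unfold karpRabin
  have h1 : u + 1 + k - k = u + 1 := by omega
  have h2 : u + 1 + k + d - k = u + 1 + d := by omega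
  have h3 : u + 1 + k - 1 = u + k := by omega
  have h4 : u + 1 + k + d - (u + 1 + k) + 1 = d + 1 := by omega
  have h5 : u + 1 + k + d - k + 1 = u + d + 2 := by omega
  rw [h1, h2, h3, h4]
  set E := u + 1 + k + d with hE
  set f : ℕ → ℤ := fun i => (T i : ℤ) * r ^ (E - i) with hf
  set A := ∑ i ∈ Finset.Icc (u+1) (u+1+d), (T i : ℤ) * r ^ (u+1+d - i) with hA
  set B := ∑ i ∈ Finset.Icc (u+1) (u+k), (T i : ℤ) * r ^ (u+k - i) with hB
  set C := ∑ i ∈ Finset.Icc (u+1+d+1) E, f i with hC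
  have key : (∑ i ∈ Finset.Icc (u+1+k) E, f i)
      = A * r ^ k - B * r ^ (d+1) + C := by
    have eA : A * r ^ k = ∑ i ∈ Finset.Icc (u+1) (u+1+d), f i := by
      rw [hA, Finset.sum_mul]
      refine Finset.sum_congr rfl fun i hi => ?_
      simp only [Finset.mem_Icc] at hi
      rw [hf, mul_assoc, ← pow_add]
      have : u + 1 + d - i + k = E - i := by omega
      rw [this]
    have eB : B * r ^ (d+1) = ∑ i ∈ Finset.Icc (u+1) (u+k), f i := by
      rw [hB, Finset.sum_mul]
      refine Finset.sum_congr rfl fun i hi => ?_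
      simp only [Finset.mem_Icc] at hi
      rw [hf, mul_assoc, ← pow_add]
      have : u + k - i + (d + 1) = E - i := by omega
      rw [this]
    rw [eA, eB, hC]
    have hIoc : ∀ a b : ℕ, Finset.Icc (a+1) b = Finset.Ioc a b := fun a b => by
      rw [← Finset.Icc_add_one_left_eq_Ioc]
    have r1 : Finset.Icc (u+1) (u+1+d) = Finset.Ioc u (u+1+d) := hIoc u _
    have r2 : Finset.Icc (u+1+d+1) E = Finset.Ioc (u+1+d) E := hIoc _ _
    have r3 : Finset.Icc (u+1) (u+k) = Finset.Ioc u (u+k) := hIoc u _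
    have r4 : Finset.Icc (u+1+k) E = Finset.Ioc (u+k) E := by
      have : u + 1 + k = (u+k) + 1 := by omega
      rw [this, hIoc]
    rw [r1, r2, r3, r4]
    have s1 : (∑ i ∈ Finset.Ioc u (u+1+d), f i) + ∑ i ∈ Finset.Ioc (u+1+d) E, f i
        = ∑ i ∈ Finset.Ioc u E, f i :=
      Finset.sum_Ioc_consecutive f (by omega) (by omega)
    have s2 : (∑ i ∈ Finset.Ioc u (u+k), f i) + ∑ i ∈ Finset.Ioc (u+k) E, f i
        = ∑ i ∈ Finset.Ioc u E, f i :=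
      Finset.sum_Ioc_consecutive f (by omega) (by omega)
    linarith
  rw [key]
  have hm : ∀ a : ℤ, a % q ≡ a [ZMOD q] := fun a =>
    (Int.emod_emod_of_dvd a dvd_rfl)
  calc (A * r ^ k - B * r ^ (d+1) + C) % q
      ≡ A * r ^ k - B * r ^ (d+1) + C [ZMOD q] := hm _
    _ ≡ (A % q) * r ^ k - (B % q) * r ^ (d+1) + C % q [ZMOD q] :=
      (((hm A).symm.mul_right _).sub ((hm B).symm.mul_right _)).add (hm C).symm
end

section
/- Let q be a prime, ℓ ≥ 1 an integer with ℓ ≤ q, and let a, b : Fin ℓ → ZMod q be two distinct sequences (a ≠ b). If the base r is drawn uniformly at random from ZMod q, then the probability that the Karp–Rabin fingerprints collide, i.e. that Σ_{i=0}^{ℓ−1} a(i)·r^{ℓ−1−i} = Σ_{i=0}^{ℓ−1} b(i)·r^{ℓ−1−i}, is at most (ℓ − 1)/q. -/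
/-- For a prime `q`, `1 ≤ ℓ ≤ q`, and two distinct length-`ℓ` sequences
    `a ≠ b` over `ZMod q`: if the base `r` is drawn uniformly at random from
    `ZMod q`, the probability of a Karp–Rabin fingerprint collision
    `Σ_i a(i)·r^(ℓ−1−i) = Σ_i b(i)·r^(ℓ−1−i)` — i.e. the number of colliding
    bases divided by `q` — is at most `(ℓ − 1)/q`. -/
theorem karpRabin_collision_probability_le
    (q : ℕ) (hq : q.Prime) (ℓ : ℕ) (hℓ : 1 ≤ ℓ) (hℓq : ℓ ≤ q)
    (a b : Fin ℓ → ZMod q) (hab : a ≠ b) :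
    haveI : Fact q.Prime := ⟨hq⟩
    ((Finset.univ.filter (fun r : ZMod q =>
        ∑ i : Fin ℓ, a i * r ^ (ℓ - 1 - (i : ℕ)) =
        ∑ i : Fin ℓ, b i * r ^ (ℓ - 1 - (i : ℕ)))).card : ℝ) / q
      ≤ ((ℓ : ℝ) - 1) / q := by
  haveI : Fact q.Prime := ⟨hq⟩
  set p : Polynomial (ZMod q) :=
    ∑ i : Fin ℓ, Polynomial.C (a i - b i) * Polynomial.X ^ (ℓ - 1 - (i : ℕ)) with hp
  have hinj : ∀ i j : Fin ℓ, ℓ - 1 - (i : ℕ) = ℓ - 1 - (j : ℕ) → i = j := by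
    intro i j h
    have hi : (i : ℕ) ≤ ℓ - 1 := Nat.le_sub_one_of_lt i.isLt
    have hj : (j : ℕ) ≤ ℓ - 1 := Nat.le_sub_one_of_lt j.isLt
    have : (i : ℕ) = j := by omega
    exact Fin.ext this
  obtain ⟨i₀, hi₀⟩ : ∃ i, a i ≠ b i := by
    by_contra h
    push_neg at h
    exact hab (funext h)
  have hcoeff : p.coeff (ℓ - 1 - (i₀ : ℕ)) = a i₀ - b i₀ := by
    rw [hp, Polynomial.finset_sum_coeff]
    rw [Finset.sum_eq_single i₀]
    · rw [Polynomial.coeff_C_mul, Polynomial.coeff_X_pow]; simp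
    · intro j _ hj
      rw [Polynomial.coeff_C_mul, Polynomial.coeff_X_pow]
      have : ¬ (ℓ - 1 - (i₀ : ℕ) = ℓ - 1 - (j : ℕ)) := fun h => hj (hinj j i₀ h.symm)
      simp [this]
    · simp
  have hpne : p ≠ 0 := by
    intro h
    rw [h] at hcoeff
    simp at hcoeff
    exact hi₀ (sub_eq_zero.mp hcoeff.symm)
  have hdeg : p.natDegree ≤ ℓ - 1 := by
    apply Polynomial.natDegree_sum_le_of_forall_le
    intro i _
    refine le_trans (Polynomial.natDegree_C_mul_le _ _) ?_
    simpa using Nat.sub_le (ℓ - 1) i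
  have hsubset : (Finset.univ.filter (fun r : ZMod q =>
        ∑ i : Fin ℓ, a i * r ^ (ℓ - 1 - (i : ℕ)) =
        ∑ i : Fin ℓ, b i * r ^ (ℓ - 1 - (i : ℕ)))) ⊆ p.roots.toFinset := by
    intro r hr
    rw [Finset.mem_filter] at hr
    rw [Multiset.mem_toFinset, Polynomial.mem_roots hpne]
    show p.eval r = 0
    rw [hp]
    simp only [Polynomial.eval_finset_sum, Polynomial.eval_mul, Polynomial.eval_C,
        Polynomial.eval_pow, Polynomial.eval_X, sub_mul]
    rw [Finset.sum_sub_distrib, sub_eq_zero]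
    exact hr.2
  have hcard : (Finset.univ.filter (fun r : ZMod q =>
        ∑ i : Fin ℓ, a i * r ^ (ℓ - 1 - (i : ℕ)) =
        ∑ i : Fin ℓ, b i * r ^ (ℓ - 1 - (i : ℕ)))).card ≤ ℓ - 1 := by
    calc _ ≤ p.roots.toFinset.card := Finset.card_le_card hsubset
      _ ≤ Multiset.card p.roots := Multiset.toFinset_card_le _
      _ ≤ p.natDegree := Polynomial.card_roots' p
      _ ≤ ℓ - 1 := hdeg
  have hq0 : (0 : ℝ) < q := by exact_mod_cast hq.pos
  have hcast : ((Finset.univ.filter (fun r : ZMod q =>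
        ∑ i : Fin ℓ, a i * r ^ (ℓ - 1 - (i : ℕ)) =
        ∑ i : Fin ℓ, b i * r ^ (ℓ - 1 - (i : ℕ)))).card : ℝ) ≤ (ℓ : ℝ) - 1 := by
    have := (Nat.cast_le (α := ℝ)).mpr hcard
    rwa [Nat.cast_sub hℓ, Nat.cast_one] at this
  gcongr
end
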